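/- For the corona G = H ∘ K₁ of a graph H with minimum degree δ(H) ≥ 1, the bondage number satisfies b(G) = δ(H) + 1. -/

import Mathlib

open SimpleGraph

variable {V : Type*}

/-- `S` is a dominating set of `G`: every vertex is in `S` or has a neighbor in `S`. -/
def SimpleGraph.IsDomSet (G : SimpleGraph V) (S : Finset V) : Prop :=
  ∀ v : V, v ∈ S ∨ ∃ u ∈ S, G.Adj u v

/-- The domination number of a finite graph. -/
noncomputable def SimpleGraph.domNum [Fintype V] (G : SimpleGraph V) : ℕ :=
  sInf {n | ∃ S : Finset V, S.card = n ∧ G.IsDomSet S}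

/-- The bondage number: the minimum size of a set of edges of `G` whose removal
increases the domination number. -/
noncomputable def SimpleGraph.bondageNum [Fintype V] (G : SimpleGraph V) : ℕ :=
  sInf {n | ∃ B : Finset (Sym2 V), B.card = n ∧ ↑B ⊆ G.edgeSet ∧
    G.domNum < (G.deleteEdges ↑B).domNum}

/-- The corona `H ∘ K₁`: for each vertex `u` of `H` (copy `Sum.inl u`) attach a new
pendant vertex `Sum.inr u` joined to it. -/
def SimpleGraph.corona (H : SimpleGraph V) : SimpleGraph (V ⊕ V) :=
  SimpleGraph.fromRel fun a b =>
    match a, b with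
    | Sum.inl u, Sum.inl v => H.Adj u v
    | Sum.inl u, Sum.inr v => u = v
    | _, _ => False

open Sum

@[simp] lemma corona_adj_ll (H : SimpleGraph V) (u v : V) :
    H.corona.Adj (inl u) (inl v) ↔ H.Adj u v := by
  simp only [SimpleGraph.corona, fromRel_adj]
  constructor
  · rintro ⟨-, h | h⟩
    · exact h
    · exact h.symm
  · exact fun h => ⟨by simpa using h.ne, Or.inl h⟩

@[simp] lemma corona_adj_lr (H : SimpleGraph V) (u v : V) :
    H.corona.Adj (inl u) (inr v) ↔ u = v := by
  simp only [SimpleGraph.corona, fromRel_adj]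
  constructor
  · rintro ⟨-, h | h⟩
    · exact h
    · exact h.elim
  · rintro rfl; exact ⟨by simp, Or.inl rfl⟩

@[simp] lemma corona_adj_rl (H : SimpleGraph V) (u v : V) :
    H.corona.Adj (inr u) (inl v) ↔ v = u := by
  rw [adj_comm, corona_adj_lr]

@[simp] lemma corona_adj_rr (H : SimpleGraph V) (u v : V) :
    ¬ H.corona.Adj (inr u) (inr v) := by
  simp only [SimpleGraph.corona, fromRel_adj]
  rintro ⟨-, h | h⟩ <;> exact h

/-- In a graph where the only possible neighbor of `inr u` is `inl u`, every
dominating set has at least `card V` elements. -/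
lemma aux_card_ge [Fintype V] (G' : SimpleGraph (V ⊕ V))
    (hpend : ∀ (u : V) (x : V ⊕ V), G'.Adj x (inr u) → x = inl u)
    (S : Finset (V ⊕ V)) (hS : G'.IsDomSet S) :
    Fintype.card V ≤ S.card := by
  classical
  set f : V → V ⊕ V := fun u => if inr u ∈ S then inr u else inl u with hf
  have hfS : ∀ u, f u ∈ S := by
    intro u
    by_cases h : inr u ∈ S
    · simp [hf, h]
    · rcases hS (inr u) with h' | ⟨x, hx, hadj⟩
      · exact absurd h' h
      · have hx' := hpend u x hadj
        subst hx'
        simpa [hf, h] using hx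
  have hinj : Function.Injective f := by
    intro a b hab
    simp only [hf] at hab
    split_ifs at hab <;> simp_all
  calc Fintype.card V = (Finset.univ.image f).card := by
        rw [Finset.card_image_of_injective _ hinj, Finset.card_univ]
    _ ≤ S.card := Finset.card_le_card (by
        intro x hx
        obtain ⟨u, -, rfl⟩ := Finset.mem_image.mp hx
        exact hfS u)

/-- If moreover both `inl u₀` and `inr u₀` are isolated, every dominating set has at
least `card V + 1` elements. -/
lemma aux_card_ge_succ [Fintype V] (G' : SimpleGraph (V ⊕ V))
    (hpend : ∀ (u : V) (x : V ⊕ V), G'.Adj x (inr u) → x = inl u)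
    (u₀ : V) (hiso₁ : ∀ x, ¬ G'.Adj x (inl u₀)) (hiso₂ : ∀ x, ¬ G'.Adj x (inr u₀))
    (S : Finset (V ⊕ V)) (hS : G'.IsDomSet S) :
    Fintype.card V + 1 ≤ S.card := by
  classical
  set f : V → V ⊕ V := fun u => if inr u ∈ S then inr u else inl u with hf
  have hfS : ∀ u, f u ∈ S := by
    intro u
    by_cases h : inr u ∈ S
    · simp [hf, h]
    · rcases hS (inr u) with h' | ⟨x, hx, hadj⟩
      · exact absurd h' h
      · have hx' := hpend u x hadj
        subst hx'
        simpa [hf, h] using hx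
  have hinj : Function.Injective f := by
    intro a b hab
    simp only [hf] at hab
    split_ifs at hab <;> simp_all
  have hr : inr u₀ ∈ S := by
    rcases hS (inr u₀) with h' | ⟨x, hx, hadj⟩
    · exact h'
    · exact absurd hadj (hiso₂ x)
  have hl : inl u₀ ∈ S := by
    rcases hS (inl u₀) with h' | ⟨x, hx, hadj⟩
    · exact h'
    · exact absurd hadj (hiso₁ x)
  have hnotmem : inl u₀ ∉ Finset.univ.image f := by
    intro hmem
    obtain ⟨u, -, hu⟩ := Finset.mem_image.mp hmem
    by_cases h : inr u ∈ S
    · simp [hf, h] at hu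
    · simp only [hf, h, if_neg, if_false] at hu
      rw [inl_injective hu] at h
      exact h hr
  calc Fintype.card V + 1 = (insert (inl u₀) (Finset.univ.image f)).card := by
        rw [Finset.card_insert_of_notMem hnotmem,
          Finset.card_image_of_injective _ hinj, Finset.card_univ]
    _ ≤ S.card := Finset.card_le_card (by
        intro x hx
        rcases Finset.mem_insert.mp hx with rfl | hx
        · exact hl
        · obtain ⟨u, -, rfl⟩ := Finset.mem_image.mp hx
          exact hfS u)

lemma domNum_le_card [Fintype V] (G : SimpleGraph V) (S : Finset V) (h : G.IsDomSet S) :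
    G.domNum ≤ S.card := Nat.sInf_le ⟨S, rfl, h⟩

lemma le_domNum [Fintype V] (G : SimpleGraph V) {m : ℕ}
    (h : ∀ S : Finset V, G.IsDomSet S → m ≤ S.card) : m ≤ G.domNum :=
  le_csInf ⟨Finset.univ.card, Finset.univ, rfl, fun v => Or.inl (Finset.mem_univ v)⟩
    (by rintro k ⟨S, rfl, hS⟩; exact h S hS)

lemma domNum_corona [Fintype V] (H : SimpleGraph V) :
    H.corona.domNum = Fintype.card V := by
  classical
  refine le_antisymm ?_ ?_
  · have hdom : H.corona.IsDomSet (Finset.univ.image inl) := by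
      intro w
      match w with
      | inl u => exact Or.inl (by simp)
      | inr u => exact Or.inr ⟨inl u, by simp, by simp⟩
    calc H.corona.domNum ≤ (Finset.univ.image (inl : V → V ⊕ V)).card :=
          domNum_le_card _ _ hdom
      _ = Fintype.card V := by
          rw [Finset.card_image_of_injective _ inl_injective, Finset.card_univ]
  · refine le_domNum _ (fun S hS => ?_)
    refine aux_card_ge _ (fun u x hadj => ?_) S hS
    match x with
    | inl v =>
      rw [corona_adj_lr] at hadj
      rw [hadj]
    | inr v => exact absurd hadj (corona_adj_rr H v u)

/-- Removal of at most `δ(H)` edges leaves a dominating set of size `card V`. -/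
lemma exists_domset_of_small [Fintype V] (H : SimpleGraph V) [DecidableRel H.Adj]
    (hδ : 1 ≤ H.minDegree) (B : Finset (Sym2 (V ⊕ V))) (hcard : B.card ≤ H.minDegree) :
    ∃ S : Finset (V ⊕ V), S.card = Fintype.card V ∧ (H.corona.deleteEdges ↑B).IsDomSet S := by
  classical
  set P : Finset V := Finset.univ.filter (fun u => s(inl u, inr u) ∈ B) with hP
  set f : V → V ⊕ V := fun u => if u ∈ P then inr u else inl u with hf
  refine ⟨Finset.univ.image f, ?_, ?_⟩
  · rw [Finset.card_image_of_injective, Finset.card_univ]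
    intro a b hab; simp only [hf] at hab; split_ifs at hab <;> simp_all
  · have hfmem : ∀ u, f u ∈ Finset.univ.image f :=
      fun u => Finset.mem_image_of_mem f (Finset.mem_univ u)
    intro w
    match w with
    | inr u =>
      by_cases hu : u ∈ P
      · exact Or.inl (by have := hfmem u; simpa only [hf, hu, if_true] using this)
      · refine Or.inr ⟨inl u, by simpa only [hf, hu, if_false] using hfmem u, ?_⟩
        rw [deleteEdges_adj]
        exact ⟨by simp, by simpa [hP] using hu⟩
    | inl u =>
      by_cases hu : u ∈ P
      · have hpendB : s(inl u, inr u) ∈ B := by simpa [hP] using hu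
        set Bad : Finset V := (H.neighborFinset u).filter
          (fun v => v ∈ P ∨ s(inl u, inl v) ∈ B) with hBad
        have hneu : ∀ c ∈ Bad, c ≠ u := by
          intro c hc
          have := (Finset.mem_filter.mp hc).1
          rw [mem_neighborFinset] at this
          exact fun h => H.irrefl (h ▸ this)
        have hkey : ∃ v ∈ H.neighborFinset u, v ∉ Bad := by
          by_contra hcon
          push_neg at hcon
          have h1 : H.minDegree ≤ Bad.card := by
            calc H.minDegree ≤ H.degree u := H.minDegree_le_degree u
              _ = (H.neighborFinset u).card := (H.card_neighborFinset_eq_degree u).symm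
              _ ≤ Bad.card := Finset.card_le_card (fun v hv => hcon v hv)
          have h2 : Bad.card ≤ (B.erase (s(inl u, inr u))).card := by
            apply Finset.card_le_card_of_injOn
              (fun v => if s(inl u, inl v) ∈ B then s(inl u, inl v) else s(inl v, inr v))
            · intro v hv
              have hne : v ≠ u := hneu v hv
              have hv2 := (Finset.mem_filter.mp hv).2
              by_cases hb : s(inl u, inl v) ∈ B
              · simp only [hb, if_true]
                refine Finset.mem_erase.mpr ⟨?_, hb⟩
                simp [Sym2.mk_eq_mk_iff, Prod.ext_iff]
              · simp only [hb, if_false]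
                have hvP : v ∈ P := hv2.resolve_right hb
                refine Finset.mem_erase.mpr ⟨?_, by simpa [hP] using hvP⟩
                simp [Sym2.mk_eq_mk_iff, Prod.ext_iff, hne]
            · intro a ha b hb hab
              have hnea := hneu a ha
              have hneb := hneu b hb
              simp only at hab
              split_ifs at hab <;>
                simp only [Sym2.mk_eq_mk_iff, Sym2.eq_iff, Prod.ext_iff, Prod.swap_prod_mk,
                  Sum.inl.injEq, Sum.inr.injEq, reduceCtorEq, and_false, false_and,
                  or_false, false_or, and_true, true_and] at hab <;> tauto
          rw [Finset.card_erase_of_mem hpendB] at h2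
          omega
        obtain ⟨v, hvnb, hvbad⟩ := hkey
        rw [hBad, Finset.mem_filter, not_and, not_or] at hvbad
        obtain ⟨hvP, hvB⟩ := hvbad hvnb
        refine Or.inr ⟨inl v, by simpa only [hf, hvP, if_false] using hfmem v, ?_⟩
        rw [deleteEdges_adj]
        constructor
        · rw [corona_adj_ll]
          exact ((mem_neighborFinset H u v).mp hvnb).symm
        · rw [Sym2.eq_swap]
          exact_mod_cast hvB
      · exact Or.inl (by simpa only [hf, hu, if_false] using hfmem u)

lemma nonempty_of_minDegree [Fintype V] (H : SimpleGraph V) [DecidableRel H.Adj]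
    (hδ : 1 ≤ H.minDegree) : Nonempty V := by
  by_contra h
  rw [not_nonempty_iff] at h
  have : H.minDegree = 0 := by
    simp [SimpleGraph.minDegree, Finset.univ_eq_empty]
  omega

/-- A set of `δ(H) + 1` edges isolating a minimum degree vertex and its pendant. -/
lemma exists_bondage_set [Fintype V] (H : SimpleGraph V) [DecidableRel H.Adj]
    (hδ : 1 ≤ H.minDegree) :
    ∃ B : Finset (Sym2 (V ⊕ V)), B.card = H.minDegree + 1 ∧ ↑B ⊆ H.corona.edgeSet ∧
      ∃ u₀ : V, (∀ x, ¬ (H.corona.deleteEdges ↑B).Adj x (inl u₀)) ∧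
        (∀ x, ¬ (H.corona.deleteEdges ↑B).Adj x (inr u₀)) := by
  classical
  have hne : Nonempty V := nonempty_of_minDegree H hδ
  obtain ⟨u, hu⟩ := H.exists_minimal_degree_vertex
  set B : Finset (Sym2 (V ⊕ V)) :=
    insert s(inl u, inr u) ((H.neighborFinset u).image fun v => s((inl u : V ⊕ V), inl v))
    with hB
  have hinjim : Function.Injective (fun v : V => s((inl u : V ⊕ V), inl v)) := by
    intro a b hab
    simp only [Sym2.congr_right] at hab
    exact inl_injective hab
  have hpendnot : s((inl u : V ⊕ V), inr u) ∉
      (H.neighborFinset u).image fun v => s((inl u : V ⊕ V), inl v) := by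
    intro hmem
    obtain ⟨v, -, hv⟩ := Finset.mem_image.mp hmem
    rw [Sym2.congr_right] at hv
    exact absurd hv (by simp)
  refine ⟨B, ?_, ?_, u, ?_, ?_⟩
  · rw [hB, Finset.card_insert_of_notMem hpendnot, Finset.card_image_of_injective _ hinjim,
      H.card_neighborFinset_eq_degree, ← hu]
  · intro e he
    rw [hB] at he
    simp only [Finset.coe_insert, Set.mem_insert_iff, Finset.coe_image, Set.mem_image,
      Finset.mem_coe] at he
    rcases he with rfl | ⟨v, hv, rfl⟩
    · rw [mem_edgeSet, corona_adj_lr]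
    · rw [mem_edgeSet, corona_adj_ll]
      exact (H.mem_neighborFinset u v).mp hv
  · intro x
    rw [deleteEdges_adj]
    rintro ⟨hadj, hnot⟩
    match x with
    | inl v =>
      apply hnot
      rw [corona_adj_ll] at hadj
      rw [Sym2.eq_swap, hB]
      exact Finset.mem_coe.mpr (Finset.mem_insert_of_mem
        (Finset.mem_image_of_mem _ ((H.mem_neighborFinset u v).mpr hadj.symm)))
    | inr v =>
      apply hnot
      rw [corona_adj_rl] at hadj
      subst hadj
      rw [Sym2.eq_swap, hB]
      exact Finset.mem_coe.mpr (Finset.mem_insert_self _ _)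
  · intro x
    rw [deleteEdges_adj]
    rintro ⟨hadj, hnot⟩
    match x with
    | inl v =>
      rw [corona_adj_lr] at hadj
      subst hadj
      exact hnot (Finset.mem_coe.mpr (Finset.mem_insert_self _ _))
    | inr v => exact corona_adj_rr H v u hadj

lemma corona_del_pend [Fintype V] (H : SimpleGraph V) (E : Set (Sym2 (V ⊕ V))) :
    ∀ (u : V) (x : V ⊕ V), (H.corona.deleteEdges E).Adj x (inr u) → x = inl u := by
  intro u x hadj
  rw [deleteEdges_adj] at hadj
  match x with
  | inl v =>
    rw [corona_adj_lr] at hadj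
    rw [hadj.1]
  | inr v => exact absurd hadj.1 (corona_adj_rr H v u)

theorem bondage_corona [Fintype V] (H : SimpleGraph V) [DecidableRel H.Adj]
    (hδ : 1 ≤ H.minDegree) :
    H.corona.bondageNum = H.minDegree + 1 := by
  classical
  have hdomcor : H.corona.domNum = Fintype.card V := domNum_corona H
  obtain ⟨B, hBcard, hBsub, u₀, hiso₁, hiso₂⟩ := exists_bondage_set H hδ
  have hmem : H.minDegree + 1 ∈ {n | ∃ B : Finset (Sym2 (V ⊕ V)), B.card = n ∧
      ↑B ⊆ H.corona.edgeSet ∧ H.corona.domNum < (H.corona.deleteEdges ↑B).domNum} := by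
    refine ⟨B, hBcard, hBsub, ?_⟩
    rw [hdomcor]
    have hge : Fintype.card V + 1 ≤ (H.corona.deleteEdges ↑B).domNum := by
      refine le_domNum _ (fun S hS => ?_)
      exact aux_card_ge_succ _ (corona_del_pend H _) u₀ hiso₁ hiso₂ S hS
    omega
  refine le_antisymm (Nat.sInf_le hmem) (le_csInf ⟨_, hmem⟩ ?_)
  rintro k ⟨B', rfl, hB'sub, hlt⟩
  by_contra hk
  push_neg at hk
  obtain ⟨S, hScard, hSdom⟩ := exists_domset_of_small H hδ B' (by omega)
  have hle : (H.corona.deleteEdges ↑B').domNum ≤ Fintype.card V := by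
    have := domNum_le_card _ S hSdom
    omega
  rw [hdomcor] at hlt
  omega
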